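/- Let Y be a simplicial set and G a group acting on Y by automorphisms of simplicial sets such that for every n ≥ 0 the action of G on the set Y_n is free. Then the levelwise quotient simplicial set G\Y, with (G\Y)_n = G\Y_n and induced simplicial operations, is 2-Segal if and only if Y is 2-Segal. -/

import Mathlib

open CategoryTheory Simplicial

universe u

namespace Seg

/-- Restriction of a simplex along a monotone map of standard simplices. -/
def res (X : SSet.{u}) {m n : ℕ} (f : Fin (m + 1) →o Fin (n + 1)) : X _⦋n⦌ → X _⦋m⦌ :=
  X.map (SimplexCategory.mkHom f).op

/-- The monotone injection `[l] → [n]`, `k ↦ i + k`, i.e. the inclusion of the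
interval `{i, i+1, …, i+l}` into `{0, …, n}`. -/
def interval {n : ℕ} (i l : ℕ) (h : i + l ≤ n) : Fin (l + 1) →o Fin (n + 1) where
  toFun k := ⟨i + k.1, by have := k.isLt; omega⟩
  monotone' := by
    intro a b hab
    have h' : a.1 ≤ b.1 := hab
    simp only [Fin.mk_le_mk]
    omega

/-- The monotone injection with image `{0,…,i} ∪ {j,…,n}` (where `i < j ≤ n`). -/
def outer {n : ℕ} (i j : ℕ) (hij : i < j) (hj : j ≤ n) :
    Fin (n - (j - i) + 2) →o Fin (n + 1) where
  toFun k := ⟨if k.1 ≤ i then k.1 else k.1 + (j - i) - 1, by have := k.isLt; split <;> omega⟩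
  monotone' := by
    intro a b hab
    have h' : a.1 ≤ b.1 := hab
    have ha := a.isLt
    have hb := b.isLt
    simp only [Fin.mk_le_mk]
    split_ifs <;> omega

/-- The monotone map `[1] → [l]` sending `0 ↦ 0` and `1 ↦ l`. -/
def ends (l : ℕ) : Fin 2 →o Fin (l + 1) where
  toFun k := ⟨k.1 * l, by
    have hk : k.1 ≤ 1 := Nat.lt_succ_iff.mp k.isLt
    have h2 : k.1 * l ≤ 1 * l := Nat.mul_le_mul hk (le_refl l)
    omega⟩
  monotone' := by
    intro a b hab
    have h' : a.1 ≤ b.1 := hab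
    simp only [Fin.mk_le_mk]
    exact Nat.mul_le_mul h' (le_refl l)

/-- The map `[0] → [n]` picking out the vertex `i`. -/
def vert {n : ℕ} (i : ℕ) (h : i ≤ n) : Fin 1 →o Fin (n + 1) where
  toFun _ := ⟨i, by omega⟩
  monotone' := fun _ _ _ => le_refl _

/-- The monotone surjection `[m+1] → [m]` hitting `i` twice; restriction along it is the
degeneracy `s_i : X_m → X_{m+1}`. -/
def degen {m : ℕ} (i : ℕ) (h : i ≤ m) : Fin (m + 2) →o Fin (m + 1) where
  toFun k := ⟨if k.1 ≤ i then k.1 else k.1 - 1, by have := k.isLt; split <;> omega⟩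
  monotone' := by
    intro a b hab
    have h' : a.1 ≤ b.1 := hab
    simp only [Fin.mk_le_mk]
    split_ifs <;> omega

/-- The 2-Segal map associated to `0 ≤ i < j ≤ n`, i.e. the canonical map
`X_n → X_{{0,…,i}∪{j,…,n}} ×_{X_{{i,j}}} X_{{i,…,j}}`, is a bijection.  (A map into a
fiber product of sets is a bijection iff every compatible pair has a unique preimage.) -/
def TwoSegalMapBij (X : SSet.{u}) (n i j : ℕ) (hij : i < j) (hj : j ≤ n) : Prop :=
  ∀ (a : X _⦋n - (j - i) + 1⦌) (b : X _⦋j - i⦌),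
    res X (interval i 1 (by omega)) a = res X (ends (j - i)) b →
    ∃! x : X _⦋n⦌,
      res X (outer i j hij hj) x = a ∧ res X (interval i (j - i) (by omega)) x = b

/-- A simplicial set is 2-Segal if all the 2-Segal maps are bijections. -/
def IsTwoSegal (X : SSet.{u}) : Prop :=
  ∀ (n i j : ℕ), 3 ≤ n → ∀ (hij : i < j) (hj : j ≤ n), TwoSegalMapBij X n i j hij hj

/-- A simplicial set is Segal (1-Segal) if for each `n ≥ 2` the map
`X_n → X_1 ×_{X_0} ⋯ ×_{X_0} X_1` (restriction to the edges `{k,k+1}`) is a bijection. -/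
def IsSegal (X : SSet.{u}) : Prop :=
  ∀ (n : ℕ), 2 ≤ n → ∀ e : Fin n → X _⦋1⦌,
    (∀ (k : ℕ) (hk : k + 1 < n),
      res X (vert 1 (le_refl 1)) (e ⟨k, by omega⟩) =
        res X (vert 0 (Nat.zero_le 1)) (e ⟨k + 1, hk⟩)) →
    ∃! x : X _⦋n⦌, ∀ k : Fin n, res X (interval k.1 1 (by have := k.isLt; omega)) x = e k

end Seg

namespace Seg

/-- An action of a group `G` on a simplicial set `Y` by automorphisms of simplicial sets:
a levelwise action commuting with all simplicial operations. -/
structure SAction (G : Type u) [Group G] (Y : SSet.{u}) where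
  smul : ∀ n : SimplexCategoryᵒᵖ, G → Y.obj n → Y.obj n
  one_smul : ∀ (n : SimplexCategoryᵒᵖ) (x : Y.obj n), smul n 1 x = x
  mul_smul : ∀ (n : SimplexCategoryᵒᵖ) (g h : G) (x : Y.obj n),
    smul n (g * h) x = smul n g (smul n h x)
  map_smul : ∀ {n m : SimplexCategoryᵒᵖ} (f : n ⟶ m) (g : G) (x : Y.obj n),
    Y.map f (smul n g x) = smul m g (Y.map f x)

variable {G : Type u} [Group G] {Y : SSet.{u}}

/-- The orbit equivalence relation on each level. -/
def SAction.setoid (A : SAction G Y) (n : SimplexCategoryᵒᵖ) : Setoid (Y.obj n) where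
  r x y := ∃ g : G, A.smul n g x = y
  iseqv := by
    constructor
    · intro x
      exact ⟨1, A.one_smul n x⟩
    · intro x y h
      obtain ⟨g, hg⟩ := h
      exact ⟨g⁻¹, by rw [← hg, ← A.mul_smul, inv_mul_cancel, A.one_smul]⟩
    · intro x y z h₁ h₂
      obtain ⟨g, hg⟩ := h₁
      obtain ⟨h, hh⟩ := h₂
      exact ⟨h * g, by rw [A.mul_smul, hg, hh]⟩

/-- The levelwise quotient simplicial set `G\Y`. -/
def quotSSet (A : SAction G Y) : SSet.{u} where
  obj n := Quotient (A.setoid n)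
  map {n m} g := TypeCat.ofHom (Quotient.map' (Y.map g) (fun x y (hxy : (A.setoid n) x y) => by
    obtain ⟨gg, hg⟩ := hxy
    exact ⟨gg, by rw [← hg, A.map_smul]⟩))
  map_id n := by
    ext q
    induction q using Quotient.inductionOn' with
    | h x =>
      simp [Quotient.map'_mk'']
  map_comp f g := by
    ext q
    induction q using Quotient.inductionOn' with
    | h x =>
      simp [Quotient.map'_mk'']


section Aux

lemma res_res (X : SSet.{u}) {k m n : ℕ} (f : Fin (m + 1) →o Fin (k + 1))
    (g : Fin (k + 1) →o Fin (n + 1)) (x : X _⦋n⦌) :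
    res X f (res X g x) = res X (g.comp f) x := by
  simp only [res, ← FunctorToTypes.map_comp_apply]
  rfl

lemma comp_key (n i j : ℕ) (hij : i < j) (hj : j ≤ n)
    (h1 : i + 1 ≤ n - (j - i) + 1) (h2 : i + (j - i) ≤ n) :
    (outer i j hij hj).comp (interval i 1 h1) = (interval i (j - i) h2).comp (ends (j - i)) := by
  ext k
  fin_cases k <;>
    simp only [OrderHom.comp_coe, Function.comp_apply, outer, interval, ends,
      OrderHom.coe_mk, Fin.mk_le_mk] <;>
    simp [Fin.ext_iff, DFunLike.coe] <;> omega

variable {G : Type u} [Group G] {Y : SSet.{u}}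

lemma res_smul (A : SAction G Y) {m n : ℕ} (f : Fin (m + 1) →o Fin (n + 1)) (g : G)
    (x : Y _⦋n⦌) :
    res Y f (A.smul _ g x) = A.smul _ g (res Y f x) :=
  A.map_smul _ g x

lemma res_quot (A : SAction G Y) {m n : ℕ} (f : Fin (m + 1) →o Fin (n + 1)) (x : Y _⦋n⦌) :
    res (quotSSet A) f (Quotient.mk'' x) = Quotient.mk'' (res Y f x) :=
  rfl

lemma quot_exact (A : SAction G Y) {n : SimplexCategoryᵒᵖ} {x y : Y.obj n}
    (h : (Quotient.mk'' x : Quotient (A.setoid n)) = Quotient.mk'' y) :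
    ∃ g : G, A.smul n g x = y :=
  Quotient.eq''.mp h

lemma quot_sound (A : SAction G Y) {n : SimplexCategoryᵒᵖ} {x y : Y.obj n} (g : G)
    (h : A.smul n g x = y) :
    (Quotient.mk'' x : Quotient (A.setoid n)) = Quotient.mk'' y :=
  Quotient.sound' ⟨g, h⟩

end Aux

/-- If a group `G` acts on a simplicial set `Y` by simplicial automorphisms, freely on each
level, then the quotient `G\Y` is 2-Segal iff `Y` is 2-Segal. -/
theorem quot_isTwoSegal_iff (A : SAction G Y)
    (hfree : ∀ (n : SimplexCategoryᵒᵖ) (g : G) (x : Y.obj n), A.smul n g x = x → g = 1) :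
    IsTwoSegal (quotSSet A) ↔ IsTwoSegal Y := by
  have hsurj : ∀ {m : SimplexCategoryᵒᵖ} (q : Quotient (A.setoid m)), ∃ x, Quotient.mk'' x = q :=
    fun q => Quotient.mk''_surjective q
  constructor
  · intro hQ n i j hn hij hj a b hab
    obtain ⟨q, ⟨hq1, hq2⟩, huniq⟩ := hQ n i j hn hij hj (Quotient.mk'' a) (Quotient.mk'' b)
      (by rw [res_quot, res_quot, hab])
    obtain ⟨x, rfl⟩ := hsurj q
    rw [res_quot] at hq1 hq2
    obtain ⟨g, hg⟩ := quot_exact A hq1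
    set x' := A.smul _ g x with hx'def
    have hxx' : (Quotient.mk'' x' : Quotient (A.setoid _)) = Quotient.mk'' x :=
      quot_sound A g⁻¹ (by rw [hx'def, ← A.mul_smul, inv_mul_cancel, A.one_smul])
    have hout : res Y (outer i j hij hj) x' = a := by
      rw [hx'def, res_smul, hg]
    have hq2' : (Quotient.mk'' (res Y (interval i (j - i) (by omega)) x') :
        Quotient (A.setoid _)) = Quotient.mk'' b := by
      rw [← res_quot, hxx', res_quot, hq2]
    obtain ⟨h, hh⟩ := quot_exact A hq2'
    have edge : res Y (ends (j - i)) (res Y (interval i (j - i) (by omega)) x')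
        = res Y (ends (j - i)) b := by
      rw [res_res, ← comp_key n i j hij hj (by omega) (by omega), ← res_res, hout, hab]
    have h1 : h = 1 := by
      apply hfree _ h (res Y (ends (j - i)) b)
      conv_lhs => rw [← edge]
      rw [← res_smul, hh]
    rw [h1, A.one_smul] at hh
    refine ⟨x', ⟨hout, hh⟩, ?_⟩
    intro y ⟨hy1, hy2⟩
    have hyq : (Quotient.mk'' y : Quotient (A.setoid _)) = Quotient.mk'' x' := by
      rw [huniq (Quotient.mk'' y) ⟨by rw [res_quot, hy1], by rw [res_quot, hy2]⟩, ← hxx']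
    obtain ⟨g', hg'⟩ := quot_exact A hyq
    have : A.smul _ g' (res Y (outer i j hij hj) y) = res Y (outer i j hij hj) x' := by
      rw [← res_smul, hg']
    rw [hy1, hout] at this
    rw [← hg', hfree _ g' a this, A.one_smul]
  · intro hY n i j hn hij hj qa qb hab
    obtain ⟨a, rfl⟩ := hsurj qa
    obtain ⟨b, rfl⟩ := hsurj qb
    rw [res_quot, res_quot] at hab
    obtain ⟨g, hg⟩ := quot_exact A hab
    set b' := A.smul _ g⁻¹ b with hb'def
    have hbb' : (Quotient.mk'' b' : Quotient (A.setoid _)) = Quotient.mk'' b :=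
      quot_sound A g (by rw [hb'def, ← A.mul_smul, mul_inv_cancel, A.one_smul])
    have hb' : res Y (ends (j - i)) b' = res Y (interval i 1 (by omega)) a := by
      rw [hb'def, res_smul, ← hg, ← A.mul_smul, inv_mul_cancel, A.one_smul]
    obtain ⟨x, ⟨hx1, hx2⟩, hxu⟩ := hY n i j hn hij hj a b' hb'.symm
    refine ⟨Quotient.mk'' x, ⟨by rw [res_quot, hx1], by rw [res_quot, hx2, hbb']⟩, ?_⟩
    intro qy ⟨hy1, hy2⟩
    obtain ⟨y, rfl⟩ := hsurj qy
    rw [res_quot] at hy1 hy2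
    obtain ⟨g1, hg1⟩ := quot_exact A hy1
    set y' := A.smul _ g1 y with hy'def
    have hyy' : (Quotient.mk'' y : Quotient (A.setoid _)) = Quotient.mk'' y' :=
      quot_sound A g1 rfl
    have hout : res Y (outer i j hij hj) y' = a := by
      rw [hy'def, res_smul, hg1]
    have hq2' : (Quotient.mk'' (res Y (interval i (j - i) (by omega)) y') :
        Quotient (A.setoid _)) = Quotient.mk'' b' := by
      rw [← res_quot, ← hyy', res_quot, hy2, hbb']
    obtain ⟨h, hh⟩ := quot_exact A hq2'
    have edge : res Y (ends (j - i)) (res Y (interval i (j - i) (by omega)) y')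
        = res Y (ends (j - i)) b' := by
      rw [res_res, ← comp_key n i j hij hj (by omega) (by omega), ← res_res, hout, hb']
    have h1 : h = 1 := by
      apply hfree _ h (res Y (ends (j - i)) b')
      conv_lhs => rw [← edge]
      rw [← res_smul, hh]
    rw [h1, A.one_smul] at hh
    rw [hyy']
    exact congrArg Quotient.mk'' (hxu y' ⟨hout, hh⟩)


end Seg
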